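/- Fix an integer n ≥ 1, a real number P ∈ (0,1), and a real number c > 0. Let γ : ℕ → ℝ be a sequence with γ_m > 0 for all m and γ_m/m → c as m → ∞. Then lim_{m→∞} [ 1 − S(m, γ_m, P) − (−1)^n · T(m, γ_m, P) ] = 1 − (1−P) / (1 − (c/n)·ln(1−P))^n. (Note that ln(1−P) < 0, so the denominator is strictly positive.) -/

import Mathlib

open Filter

open Finset Real Topology

section helpers
lemma cast_asc_prod (m k : ℕ) :
    (m.ascFactorial k : ℝ) = ∏ i ∈ Finset.range k, ((m : ℝ) + i) := by
  induction k with
  | zero => simp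
  | succ k ih =>
      rw [Nat.ascFactorial_succ, Finset.prod_range_succ, ← ih]
      push_cast; ring


lemma roc_key (p : ℕ) (x : ℝ) : ∀ M : ℕ,
    (1 - x) ^ (p + 1) * ∑ k ∈ Finset.range M, (((p + k).choose k : ℕ) : ℝ) * x ^ k
      = 1 - ∑ j ∈ Finset.range (p + 1), (((p + M).choose j : ℕ) : ℝ) * (1 - x) ^ j * x ^ (M + (p - j)) := by
  intro M
  induction M with
  | zero =>
      simp only [Finset.range_zero, Finset.sum_empty, mul_zero, Nat.add_zero, Nat.zero_add]
      have h := add_pow (1 - x) x p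
      simp only [sub_add_cancel, one_pow] at h
      have e : ∑ j ∈ Finset.range (p+1), ((p.choose j : ℕ) : ℝ) * (1-x)^j * x^(p-j)
          = ∑ j ∈ Finset.range (p+1), (1-x)^j * x^(p-j) * ((p.choose j : ℕ) : ℝ) :=
        Finset.sum_congr rfl (by intros; ring)
      rw [e, ← h]; ring
  | succ M ih =>
      rw [Finset.sum_range_succ, mul_add, ih]
      set A := ∑ j ∈ Finset.range (p + 1), (((p + M).choose j : ℕ) : ℝ) * (1 - x) ^ j * x ^ (M + (p - j)) with hA
      have hS1 : ∑ j ∈ Finset.range p, (((p + M).choose j : ℕ) : ℝ) * (1 - x) ^ (j+1) * x ^ (M + (p - j))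
          = (1 - x) * (A - ((p + M).choose p : ℝ) * (1 - x) ^ p * x ^ M) := by
        have : A = (∑ j ∈ Finset.range p, (((p + M).choose j : ℕ) : ℝ) * (1 - x) ^ j * x ^ (M + (p - j)))
            + (((p + M).choose p : ℕ) : ℝ) * (1 - x) ^ p * x ^ (M + (p - p)) := Finset.sum_range_succ _ p
        rw [Nat.sub_self, Nat.add_zero] at this
        have h2 : (1 - x) * (A - ((p + M).choose p : ℝ) * (1 - x) ^ p * x ^ M)
            = (1 - x) * ∑ j ∈ Finset.range p, (((p + M).choose j : ℕ) : ℝ) * (1 - x) ^ j * x ^ (M + (p - j)) := by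
          rw [this]; ring
        rw [h2, Finset.mul_sum]
        exact Finset.sum_congr rfl (by intros; ring)
      have hS2 : ∑ j ∈ Finset.range p, (((p + M).choose (j+1) : ℕ) : ℝ) * (1 - x) ^ (j+1) * x ^ (M + (p - j))
          = x * (A - x ^ (M + p)) := by
        have hA0 : A = (∑ j ∈ Finset.range p, (((p + M).choose (j+1) : ℕ) : ℝ) * (1 - x) ^ (j+1) * x ^ (M + (p - (j+1))))
            + (((p + M).choose 0 : ℕ) : ℝ) * (1 - x) ^ 0 * x ^ (M + (p - 0)) :=
          Finset.sum_range_succ' _ p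
        simp only [Nat.choose_zero_right, Nat.cast_one, pow_zero, Nat.sub_zero, one_mul, mul_one] at hA0
        have h2 : x * (A - x ^ (M + p))
            = x * ∑ j ∈ Finset.range p, (((p + M).choose (j+1) : ℕ) : ℝ) * (1 - x) ^ (j+1) * x ^ (M + (p - (j+1))) := by
          rw [hA0]; ring
        rw [h2, Finset.mul_sum]
        apply Finset.sum_congr rfl
        intro j hj
        rw [Finset.mem_range] at hj
        have h3 : M + (p - j) = (M + (p - (j+1))) + 1 := by omega
        rw [h3, pow_succ]
        ring
      have hA' : ∑ j ∈ Finset.range (p + 1), (((p + (M+1)).choose j : ℕ) : ℝ) * (1 - x) ^ j * x ^ ((M+1) + (p - j))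
          = A - ((p + M).choose p : ℝ) * (1 - x) ^ (p+1) * x ^ M := by
        rw [Finset.sum_range_succ' (fun j => (((p + (M+1)).choose j : ℕ) : ℝ) * (1 - x) ^ j * x ^ ((M+1) + (p - j)))]
        have hsplit : ∀ j ∈ Finset.range p,
            (((p + (M+1)).choose (j+1) : ℕ) : ℝ) * (1 - x) ^ (j+1) * x ^ ((M+1) + (p - (j+1)))
              = (((p + M).choose j : ℕ) : ℝ) * (1 - x) ^ (j+1) * x ^ (M + (p - j))
                + (((p + M).choose (j+1) : ℕ) : ℝ) * (1 - x) ^ (j+1) * x ^ (M + (p - j)) := by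
          intro j hj
          rw [Finset.mem_range] at hj
          have h1 : p + (M+1) = (p + M) + 1 := by omega
          have h2 : (M+1) + (p - (j+1)) = M + (p - j) := by omega
          rw [h1, Nat.choose_succ_succ, h2]
          push_cast; ring
        rw [Finset.sum_congr rfl hsplit, Finset.sum_add_distrib, hS1, hS2]
        simp only [Nat.choose_zero_right, Nat.cast_one, pow_zero, Nat.sub_zero, one_mul, mul_one]
        have : (M+1) + p = (M + p) + 1 := by omega
        rw [this, pow_succ]
        ring
      rw [hA']
      have hsymm : ((p + M).choose M : ℝ) = ((p + M).choose p : ℝ) := by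
        rw [Nat.choose_symm_add, Nat.add_comm p M, Nat.choose_symm_add]
      rw [hsymm]; ring


lemma exp_slope : Tendsto (fun h : ℝ => (Real.exp h - 1) / h) (𝓝[≠] 0) (𝓝 1) := by
  have h := (Real.hasDerivAt_exp 0)
  rw [hasDerivAt_iff_tendsto_slope] at h
  simp only [Real.exp_zero] at h
  refine h.congr (fun y => ?_) |>.mono_left le_rfl
  simp [slope_def_field, div_eq_inv_mul]

lemma log_slope : Tendsto (fun y : ℝ => Real.log y / (y - 1)) (𝓝[≠] 1) (𝓝 1) := by
  have h := Real.hasDerivAt_log (one_ne_zero)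
  rw [hasDerivAt_iff_tendsto_slope] at h
  simp only [inv_one] at h
  refine h.congr (fun y => ?_)
  simp [slope_def_field, Real.log_one, div_eq_inv_mul]

lemma mul_exp_div (d : ℝ) :
    Tendsto (fun m : ℕ => (m : ℝ) * (Real.exp (d / m) - 1)) atTop (𝓝 d) := by
  rcases eq_or_ne d 0 with rfl | hd
  · simpa using tendsto_const_nhds (x := (0:ℝ)) (f := atTop (α := ℕ))
  · have hε : Tendsto (fun m : ℕ => d / (m : ℝ)) atTop (𝓝[≠] 0) := by
      apply tendsto_nhdsWithin_of_tendsto_nhds_of_eventually_within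
      · simpa [div_eq_mul_inv] using (tendsto_const_nhds (x := d)).mul (tendsto_one_div_atTop_nhds_zero_nat)
      · filter_upwards [eventually_gt_atTop 0] with m hm
        have : (m:ℝ) ≠ 0 := Nat.cast_ne_zero.mpr hm.ne'
        simp [div_eq_iff this, hd]
    have := (exp_slope.comp hε).const_mul d
    rw [mul_one] at this
    apply this.congr'
    filter_upwards [eventually_gt_atTop 0] with m hm
    have hm0 : (m:ℝ) ≠ 0 := Nat.cast_ne_zero.mpr hm.ne'
    simp only [Function.comp_apply]
    field_simp

lemma tendsto_pow_exp {y : ℕ → ℝ} {b : ℝ} (hy : ∀ᶠ m in atTop, 1 < y m)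
    (h : Tendsto (fun m : ℕ => (m : ℝ) * (y m - 1)) atTop (𝓝 b)) (K : ℕ) :
    Tendsto (fun m : ℕ => y m ^ (m - K)) atTop (𝓝 (Real.exp b)) := by
  have hy1 : Tendsto y atTop (𝓝 1) := by
    have := h.mul tendsto_one_div_atTop_nhds_zero_nat
    rw [mul_zero] at this
    have h2 : Tendsto (fun m : ℕ => 1 + (m : ℝ) * (y m - 1) * (1 / m)) atTop (𝓝 1) := by
      simpa using tendsto_const_nhds.add this
    apply h2.congr'
    filter_upwards [eventually_gt_atTop 0] with m hm
    have hm0 : (m:ℝ) ≠ 0 := Nat.cast_ne_zero.mpr hm.ne'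
    field_simp
    ring
  have hyne : Tendsto y atTop (𝓝[≠] 1) := by
    apply tendsto_nhdsWithin_of_tendsto_nhds_of_eventually_within _ hy1
    filter_upwards [hy] with m hm
    exact ne_of_gt hm
  have hlog : Tendsto (fun m => Real.log (y m) / (y m - 1)) atTop (𝓝 1) :=
    log_slope.comp hyne
  have hfrac : Tendsto (fun m : ℕ => ((m - K : ℕ) : ℝ) / m) atTop (𝓝 1) := by
    have : Tendsto (fun m : ℕ => 1 - (K:ℝ) * (1 / m)) atTop (𝓝 1) := by
      simpa using (tendsto_const_nhds (x := (1:ℝ))).sub ((tendsto_const_nhds (x := (K:ℝ))).mul tendsto_one_div_atTop_nhds_zero_nat)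
    apply this.congr'
    filter_upwards [eventually_ge_atTop (K+1)] with m hm
    have hm0 : (m:ℝ) ≠ 0 := Nat.cast_ne_zero.mpr (by omega)
    rw [Nat.cast_sub (by omega)]
    field_simp
  have hexp : Tendsto (fun m : ℕ => ((m - K : ℕ) : ℝ) * Real.log (y m)) atTop (𝓝 b) := by
    have := (hfrac.mul h).mul hlog
    rw [one_mul, mul_one] at this
    apply this.congr'
    filter_upwards [hy, eventually_ge_atTop (K+1)] with m hm hmK
    have hm0 : (m:ℝ) ≠ 0 := Nat.cast_ne_zero.mpr (by omega)
    have hym : y m - 1 ≠ 0 := by linarith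
    field_simp
  have := (Real.continuous_exp.tendsto b).comp hexp
  apply this.congr'
  filter_upwards [hy] with m hm
  simp only [Function.comp_apply]
  rw [mul_comm, Real.exp_mul, Real.exp_log (by linarith), Real.rpow_natCast]

end helpers

/-- The function `S(m,γ,P)` of Appendix D of the paper. -/
noncomputable def rocS (n m : ℕ) (γ P : ℝ) : ℝ :=
  (n.factorial : ℝ) * (1 + 1 / γ) ^ (m - n) *
    ∑ k ∈ Finset.range n, ∑ ℓ ∈ Finset.range (n - k),
      ((-1 : ℝ) ^ k * (m + k - 1).factorial /
          ((m - 1).factorial * k.factorial * (n - 1 - k - ℓ).factorial *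
            (k + ℓ + 1).factorial * γ ^ (n - ℓ - 1))) *
        (1 - P) ^ (((m : ℝ) * ((n : ℝ) - 1) + ℓ + 1) / ((m : ℝ) * n)) /
        (1 + γ * (1 - (1 - P) ^ (1 / ((m : ℝ) * (n : ℝ))))) ^ (ℓ + 1)

/-- The function `T(m,γ,P)` of Appendix D of the paper. -/
noncomputable def rocT (n m : ℕ) (γ P : ℝ) : ℝ :=
  ∑ k ∈ Finset.range (m - n),
    ((n + k - 1).factorial : ℝ) / (k.factorial * (n - 1).factorial * γ ^ n) *
      (1 + 1 / γ) ^ k * (1 - P) ^ (((n : ℝ) * ((m : ℝ) - 1) - k) / ((m : ℝ) * n))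

set_option maxHeartbeats 4000000 in
/-- Asymptotic ROC limit (Corollary 7 of the paper): as `m → ∞` with `γ_m/m → c`,
the exact detection probability `1 − S(m,γ_m,P) − (−1)^n T(m,γ_m,P)` converges to
`1 − (1−P)/(1 − (c/n)·ln(1−P))^n`. -/
theorem asymptotic_roc (n : ℕ) (hn : 1 ≤ n) (P : ℝ) (hP : P ∈ Set.Ioo (0 : ℝ) 1)
    (c : ℝ) (hc : 0 < c) (γ : ℕ → ℝ) (hγpos : ∀ m, 0 < γ m)
    (hγ : Tendsto (fun m : ℕ => γ m / m) atTop (nhds c)) :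
    Tendsto (fun m : ℕ => 1 - rocS n m (γ m) P - (-1 : ℝ) ^ n * rocT n m (γ m) P) atTop
      (nhds (1 - (1 - P) / (1 - c / n * Real.log (1 - P)) ^ n)) := by
  obtain ⟨hP0, hP1⟩ := hP
  have hq0 : (0:ℝ) < 1 - P := by linarith
  have hnR : (0:ℝ) < (n:ℝ) := by exact_mod_cast hn
  have hnne : (n:ℝ) ≠ 0 := hnR.ne'
  set L : ℝ := Real.log (1 - P) with hLdef
  have hL0 : L < 0 := Real.log_neg hq0 (by linarith)
  have hLne : L ≠ 0 := hL0.ne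
  set a : ℝ := 1/c - L/n with hadef
  have ha : 0 < a := by
    have h1 : 0 < 1/c := by positivity
    have h2 : 0 < -L/n := div_pos (by linarith) hnR
    rw [hadef]; have : L/(n:ℝ) = -(-L/n) := by ring
    rw [this]; linarith
  set b : ℝ := 1 - c/n*L with hbdef
  have hba : b = c*a := by rw [hbdef, hadef]; field_simp
  have hb0 : 0 < b := by rw [hba]; positivity
  -- basic limits
  have hγne : ∀ m, γ m ≠ 0 := fun m => (hγpos m).ne'
  have hγtop : Tendsto γ atTop atTop := by
    have hlow : Tendsto (fun m : ℕ => c/2 * (m:ℝ)) atTop atTop :=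
      Tendsto.const_mul_atTop (by positivity) tendsto_natCast_atTop_atTop
    apply tendsto_atTop_mono' _ _ hlow
    have hev := hγ.eventually (eventually_ge_nhds (show c/2 < c by linarith))
    filter_upwards [hev, eventually_gt_atTop 0] with m hm hm1
    have hmpos : (0:ℝ) < (m:ℝ) := by exact_mod_cast hm1
    calc c/2 * (m:ℝ) ≤ (γ m / m) * m := by
          apply mul_le_mul_of_nonneg_right hm hmpos.le
      _ = γ m := by field_simp
  have hinvγ : Tendsto (fun m => 1 / γ m) atTop (𝓝 0) := by
    simp only [one_div]
    exact tendsto_inv_atTop_zero.comp hγtop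
  have hmγ : Tendsto (fun m : ℕ => (m:ℝ) / γ m) atTop (𝓝 (1/c)) := by
    have := hγ.inv₀ hc.ne'
    rw [show (1:ℝ)/c = c⁻¹ from one_div c]
    apply this.congr'
    filter_upwards [eventually_gt_atTop 0] with m hm
    rw [inv_div]
  -- the auxiliary sequence x
  set x : ℕ → ℝ := fun m => (1 + 1/γ m) * Real.exp (-L/((m:ℝ)*n)) with hxdef
  have hδ : Tendsto (fun m : ℕ => (m:ℝ)*(Real.exp (-L/((m:ℝ)*n)) - 1)) atTop (𝓝 (-L/n)) := by
    apply (mul_exp_div (-L/n)).congr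
    intro m; rw [show -L/(n:ℝ)/(m:ℝ) = -L/((m:ℝ)*n) by ring]
  have hδ' : Tendsto (fun m : ℕ => (m:ℝ)*(Real.exp (L/((m:ℝ)*n)) - 1)) atTop (𝓝 (L/n)) := by
    apply (mul_exp_div (L/n)).congr
    intro m; rw [show L/(n:ℝ)/(m:ℝ) = L/((m:ℝ)*n) by ring]
  have hxgt : ∀ᶠ m : ℕ in atTop, 1 < x m := by
    filter_upwards [eventually_gt_atTop 0] with m hm
    have hmpos : (0:ℝ) < (m:ℝ) := by exact_mod_cast hm
    have he : 1 < Real.exp (-L/((m:ℝ)*n)) := by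
      rw [show (1:ℝ) = Real.exp 0 from (Real.exp_zero).symm]
      apply Real.exp_lt_exp.mpr
      apply div_pos (by linarith) (by positivity)
    have hg1 : (1:ℝ) ≤ 1 + 1/γ m := by
      have h0 := one_div_pos.mpr (hγpos m); linarith
    calc (1:ℝ) < Real.exp (-L/((m:ℝ)*n)) := he
      _ = 1 * Real.exp (-L/((m:ℝ)*n)) := (one_mul _).symm
      _ ≤ (1 + 1/γ m) * Real.exp (-L/((m:ℝ)*n)) := by
          apply mul_le_mul_of_nonneg_right hg1 (Real.exp_pos _).le
  have hexp1 : Tendsto (fun m : ℕ => Real.exp (-L/((m:ℝ)*n))) atTop (𝓝 1) := by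
    rw [show (1:ℝ) = Real.exp 0 from (Real.exp_zero).symm]
    apply (Real.continuous_exp.tendsto 0).comp
    have : Tendsto (fun m : ℕ => (-L/n)*(1/(m:ℝ))) atTop (𝓝 0) := by
      simpa using (tendsto_const_nhds (x := -L/(n:ℝ))).mul tendsto_one_div_atTop_nhds_zero_nat
    apply this.congr; intro m; rw [show -L/(n:ℝ)*(1/(m:ℝ)) = -L/((m:ℝ)*n) by ring]
  have hd : Tendsto (fun m : ℕ => (m:ℝ)*(x m - 1)) atTop (𝓝 a) := by
    have h := hδ.add (hmγ.mul hexp1)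
    rw [show -L/(n:ℝ) + 1/c * 1 = a by rw [hadef]; ring] at h
    apply h.congr
    intro m
    have := hγne m
    rw [hxdef]
    field_simp
    ring
  have hg : Tendsto (fun m : ℕ => γ m * (x m - 1)) atTop (𝓝 b) := by
    have h := hγ.mul hd
    rw [show c * a = b from hba.symm] at h
    apply h.congr'
    filter_upwards [eventually_gt_atTop 0] with m hm
    have hmne : (m:ℝ) ≠ 0 := Nat.cast_ne_zero.mpr hm.ne'
    field_simp
  have hgpos : ∀ᶠ m : ℕ in atTop, 0 < γ m * (x m - 1) := by
    filter_upwards [hxgt] with m hm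
    exact mul_pos (hγpos m) (by linarith)
  have hw : Tendsto (fun m : ℕ => 1 + γ m * (1 - Real.exp (L/((m:ℝ)*n)))) atTop (𝓝 b) := by
    have h := (tendsto_const_nhds (x := (1:ℝ))).add (hγ.mul hδ').neg
    rw [show (1:ℝ) + -(c * (L/n)) = b by rw [hbdef]; ring] at h
    apply h.congr'
    filter_upwards [eventually_gt_atTop 0] with m hm
    have hmne : (m:ℝ) ≠ 0 := Nat.cast_ne_zero.mpr hm.ne'
    field_simp
    ring
  have hxpow : ∀ K : ℕ, Tendsto (fun m : ℕ => x m ^ (m - K)) atTop (𝓝 (Real.exp a)) :=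
    fun K => tendsto_pow_exp hxgt hd K
  have h1γpow : Tendsto (fun m : ℕ => (1 + 1/γ m) ^ (m - n)) atTop (𝓝 (Real.exp (1/c))) := by
    apply tendsto_pow_exp
    · filter_upwards with m
      have := hγpos m
      have : 0 < 1/γ m := by positivity
      linarith
    · apply hmγ.congr
      intro m
      rw [add_sub_cancel_left, ← div_eq_mul_one_div]  
  have hFk : ∀ k : ℕ, Tendsto (fun m : ℕ => ∏ i ∈ Finset.range k, (((m:ℝ) + i)/γ m)) atTop
      (𝓝 ((1/c)^k)) := by
    intro k
    rw [show ((1:ℝ)/c)^k = ∏ _i ∈ Finset.range k, (1/c) by rw [Finset.prod_const, Finset.card_range]]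
    apply tendsto_finset_prod
    intro i _
    have h := hmγ.add (hinvγ.const_mul (i:ℝ))
    rw [mul_zero, add_zero] at h
    apply h.congr
    intro m
    have := hγne m
    field_simp
  have hchoosej : ∀ j : ℕ, Tendsto (fun m : ℕ => (((m-1).choose j : ℕ) : ℝ) * (1 - x m)^j) atTop
      (𝓝 ((-a)^j / j.factorial)) := by
    intro j
    have hfac : Tendsto (fun m : ℕ => (∏ i ∈ Finset.range j, (((m:ℝ) - 1 - i) * (1 - x m))) / j.factorial)
        atTop (𝓝 ((-a)^j / j.factorial)) := by
      apply Tendsto.div_const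
      rw [show ((-a):ℝ)^j = ∏ _i ∈ Finset.range j, (-a) by rw [Finset.prod_const, Finset.card_range]]
      apply tendsto_finset_prod
      intro i _
      have hr : Tendsto (fun m : ℕ => ((m:ℝ) - 1 - i)/m) atTop (𝓝 1) := by
        have h : Tendsto (fun m : ℕ => 1 - (1 + (i:ℝ)) * (1/(m:ℝ))) atTop (𝓝 1) := by
          simpa using (tendsto_const_nhds (x := (1:ℝ))).sub ((tendsto_const_nhds (x := 1 + (i:ℝ))).mul tendsto_one_div_atTop_nhds_zero_nat)
        apply h.congr'
        filter_upwards [eventually_gt_atTop 0] with m hm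
        have hmne : (m:ℝ) ≠ 0 := Nat.cast_ne_zero.mpr hm.ne'
        field_simp
        ring
      have h := (hr.mul hd).neg
      rw [one_mul] at h
      apply h.congr'
      filter_upwards [eventually_gt_atTop 0] with m hm
      have hmne : (m:ℝ) ≠ 0 := Nat.cast_ne_zero.mpr hm.ne'
      field_simp
      ring
    apply hfac.congr'
    filter_upwards [eventually_ge_atTop (j+1)] with m hm
    have hcast : (((m-1).choose j : ℕ) : ℝ) = (∏ i ∈ Finset.range j, ((m:ℝ) - 1 - i)) / j.factorial := by
      have hdesc : (m-1).descFactorial j = j.factorial * (m-1).choose j :=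
        Nat.descFactorial_eq_factorial_mul_choose _ _
      have hprod : (m-1).descFactorial j = ∏ i ∈ Finset.range j, ((m-1) - i) :=
        Nat.descFactorial_eq_prod_range _ _
      have hcast2 : (((m-1).descFactorial j : ℕ) : ℝ) = ∏ i ∈ Finset.range j, ((m:ℝ) - 1 - i) := by
        rw [hprod]
        push_cast [Nat.cast_prod]
        apply Finset.prod_congr rfl
        intro i hi
        rw [Finset.mem_range] at hi
        rw [Nat.cast_sub (by omega), Nat.cast_sub (by omega)]
        push_cast
        ring
      have := congrArg (fun t : ℕ => (t:ℝ)) hdesc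
      simp only [Nat.cast_mul] at this
      rw [hcast2] at this
      rw [eq_div_iff (by exact_mod_cast (Nat.factorial_pos j).ne')]
      rw [this]; ring
    rw [hcast, Finset.prod_mul_distrib, Finset.prod_const, Finset.card_range]
    ring
  -- rewriting rocT
  have hTeq : ∀ᶠ m : ℕ in atTop, rocT n m (γ m) P
      = Real.exp (L*(((m:ℝ)-1)/m)) * ((-1:ℝ)^n/(γ m*(x m-1))^n) *
        (1 - ∑ j ∈ Finset.range n, (((m-1).choose j : ℕ):ℝ)*(1-x m)^j * x m^(m-(j+1))) := by
    filter_upwards [eventually_ge_atTop (n+1), hxgt] with m hm hxm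
    have hmpos : 0 < m := by omega
    have hmne : (m:ℝ) ≠ 0 := Nat.cast_ne_zero.mpr hmpos.ne'
    have hxne : x m - 1 ≠ 0 := by linarith
    have hsummand : ∀ k ∈ Finset.range (m - n),
        ((n + k - 1).factorial : ℝ) / (k.factorial * (n - 1).factorial * γ m ^ n) *
          (1 + 1 / γ m) ^ k * (1 - P) ^ (((n : ℝ) * ((m : ℝ) - 1) - k) / ((m : ℝ) * n))
        = (Real.exp (L*(((m:ℝ)-1)/m)) * (1/γ m^n)) * (((((n-1)+k).choose k : ℕ):ℝ) * x m^k) := by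
      intro k _
      have hrpow : (1 - P) ^ (((n : ℝ) * ((m : ℝ) - 1) - k) / ((m : ℝ) * n))
          = Real.exp (L*(((m:ℝ)-1)/m)) * (Real.exp (-L/((m:ℝ)*n)))^k := by
        rw [Real.rpow_def_of_pos hq0, ← hLdef, ← Real.exp_nat_mul, ← Real.exp_add]
        congr 1
        field_simp
        ring
      have hfac : ((n + k - 1).factorial : ℝ)
          = (((n-1)+k).choose k : ℕ) * ((n-1).factorial : ℝ) * (k.factorial : ℝ) := by
        have h1 : n + k - 1 = (n-1) + k := by omega
        rw [h1, ← Nat.add_choose_mul_factorial_mul_factorial (n-1) k]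
        push_cast
        ring
      rw [hrpow, hfac, hxdef]
      have hk : (k.factorial : ℝ) ≠ 0 := by exact_mod_cast (Nat.factorial_pos k).ne'
      have hn1 : ((n-1).factorial : ℝ) ≠ 0 := by exact_mod_cast (Nat.factorial_pos (n-1)).ne'
      have hγn : γ m ^ n ≠ 0 := pow_ne_zero n (hγne m)
      rw [mul_pow]
      field_simp
    rw [rocT, Finset.sum_congr rfl hsummand, ← Finset.mul_sum]
    -- now apply the key identity
    have hkey := roc_key (n-1) (x m) (m-n)
    have hn1 : n - 1 + 1 = n := by omega
    rw [hn1] at hkey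
    have hsum2 : ∑ j ∈ Finset.range n, (((n-1+(m-n)).choose j : ℕ):ℝ) * (1-x m)^j * x m^((m-n)+((n-1)-j))
        = ∑ j ∈ Finset.range n, (((m-1).choose j : ℕ):ℝ)*(1-x m)^j * x m^(m-(j+1)) := by
      apply Finset.sum_congr rfl
      intro j hj
      rw [Finset.mem_range] at hj
      have e1 : n - 1 + (m-n) = m - 1 := by omega
      have e2 : (m-n)+((n-1)-j) = m - (j+1) := by omega
      rw [e1, e2]
    rw [hsum2] at hkey
    have hxpow_ne : ((1:ℝ) - x m)^n ≠ 0 := pow_ne_zero n (by intro h; apply hxne; linarith [sub_eq_zero.mp h])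
    have hsumval : ∑ k ∈ Finset.range (m-n), (((n-1+k).choose k : ℕ):ℝ) * x m^k
        = (1 - ∑ j ∈ Finset.range n, (((m-1).choose j : ℕ):ℝ)*(1-x m)^j * x m^(m-(j+1))) / (1-x m)^n := by
      rw [eq_div_iff hxpow_ne, ← hkey]
      ring
    rw [hsumval]
    have hfactor : (1/γ m^n) * ((1:ℝ)/(1-x m)^n) = (-1:ℝ)^n/(γ m*(x m-1))^n := by
      rw [div_mul_div_comm, one_mul]
      rw [show ((-1:ℝ))^n/(γ m*(x m-1))^n = ((-1)/(γ m*(x m-1)))^n from (div_pow _ _ n).symm]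
      rw [show (γ m^n * (1-x m)^n : ℝ) = (γ m * (1-x m))^n from (mul_pow _ _ n).symm]
      rw [show ((1:ℝ))/(γ m * (1-x m))^n = (1/(γ m*(1-x m)))^n by rw [div_pow, one_pow]]
      congr 1
      have h1 : γ m * (1 - x m) ≠ 0 := by
        apply mul_ne_zero (hγne m)
        intro h
        exact hxne (by linarith [sub_eq_zero.mp h])
      rw [div_eq_div_iff h1 (mul_ne_zero (hγne m) hxne)]
      ring
    rw [← hfactor]
    ring
  -- limit of rocT
  have hE0 : Tendsto (fun m : ℕ => Real.exp (L*(((m:ℝ)-1)/m))) atTop (𝓝 (Real.exp L)) := by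
    apply (Real.continuous_exp.tendsto L).comp
    have h : Tendsto (fun m : ℕ => L - L*(1/(m:ℝ))) atTop (𝓝 L) := by
      simpa using (tendsto_const_nhds (x := L)).sub ((tendsto_const_nhds (x := L)).mul tendsto_one_div_atTop_nhds_zero_nat)
    apply h.congr'
    filter_upwards [eventually_gt_atTop 0] with m hm
    have hmne : (m:ℝ) ≠ 0 := Nat.cast_ne_zero.mpr hm.ne'
    field_simp
  have hT : Tendsto (fun m : ℕ => rocT n m (γ m) P) atTop
      (𝓝 (Real.exp L * ((-1:ℝ)^n/b^n) *
        (1 - ∑ j ∈ Finset.range n, (-a)^j/(j.factorial : ℝ) * Real.exp a))) := by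
    have hfrac : Tendsto (fun m : ℕ => (-1:ℝ)^n/(γ m*(x m-1))^n) atTop (𝓝 ((-1:ℝ)^n/b^n)) :=
      tendsto_const_nhds.div (hg.pow n) (pow_ne_zero n hb0.ne')
    have hbr : Tendsto (fun m : ℕ => 1 - ∑ j ∈ Finset.range n,
        (((m-1).choose j : ℕ):ℝ)*(1-x m)^j * x m^(m-(j+1))) atTop
        (𝓝 (1 - ∑ j ∈ Finset.range n, (-a)^j/(j.factorial : ℝ) * Real.exp a)) := by
      apply tendsto_const_nhds.sub
      apply tendsto_finset_sum
      intro j _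
      exact (hchoosej j).mul (hxpow (j+1))
    exact Tendsto.congr' (by filter_upwards [hTeq] with m hm; rw [hm]) ((hE0.mul hfrac).mul hbr)
  -- rewriting rocS
  have hSeq : ∀ᶠ m : ℕ in atTop, rocS n m (γ m) P
      = (n.factorial : ℝ) * (1 + 1/γ m)^(m-n) *
        ∑ k ∈ Finset.range n, ∑ ℓ ∈ Finset.range (n-k),
          ((-1:ℝ)^k * (∏ i ∈ Finset.range k, (((m:ℝ)+i)/γ m)) * (1/γ m)^(n-1-k-ℓ) /
            ((k.factorial:ℝ) * ((n-1-k-ℓ).factorial:ℝ) * ((k+ℓ+1).factorial:ℝ))) *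
          Real.exp (L * (((m:ℝ)*((n:ℝ)-1)+ℓ+1)/((m:ℝ)*n))) /
          (1 + γ m*(1 - Real.exp (L/((m:ℝ)*n))))^(ℓ+1) := by
    filter_upwards [eventually_gt_atTop 0] with m hm
    have hmne : (m:ℝ) ≠ 0 := Nat.cast_ne_zero.mpr hm.ne'
    rw [rocS]
    congr 1
    apply Finset.sum_congr rfl
    intro k hk
    apply Finset.sum_congr rfl
    intro ℓ hℓ
    rw [Finset.mem_range] at hk hℓ
    have hW : (1 - P) ^ (1 / ((m : ℝ) * (n : ℝ))) = Real.exp (L/((m:ℝ)*n)) := by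
      rw [Real.rpow_def_of_pos hq0, ← hLdef, mul_one_div]
    have hE : (1 - P) ^ (((m : ℝ) * ((n : ℝ) - 1) + ℓ + 1) / ((m : ℝ) * n))
        = Real.exp (L * (((m:ℝ)*((n:ℝ)-1)+ℓ+1)/((m:ℝ)*n))) := by
      rw [Real.rpow_def_of_pos hq0, ← hLdef]
    rw [hW, hE]
    congr 2
    -- first factor equality
    have hfac : ((m + k - 1).factorial : ℝ)
        = ((m-1).factorial : ℝ) * ∏ i ∈ Finset.range k, ((m:ℝ)+i) := by
      have h1 : m + k - 1 = (m-1) + k := by omega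
      rw [h1, ← Nat.factorial_mul_ascFactorial (m-1) k]
      have h2 : m - 1 + 1 = m := by omega
      rw [h2]
      push_cast [cast_asc_prod]
      ring
    have hpow : γ m ^ (n - ℓ - 1) = γ m^k * γ m^(n-1-k-ℓ) := by
      rw [← pow_add]
      congr 1
      omega
    have hprod : (∏ i ∈ Finset.range k, (((m:ℝ)+i)/γ m))
        = (∏ i ∈ Finset.range k, ((m:ℝ)+i))/γ m^k := by
      rw [Finset.prod_div_distrib, Finset.prod_const, Finset.card_range]
    rw [hfac, hpow, hprod]
    have hne1 : ((m-1).factorial : ℝ) ≠ 0 := by exact_mod_cast (Nat.factorial_pos _).ne'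
    have hne2 : (k.factorial : ℝ) ≠ 0 := by exact_mod_cast (Nat.factorial_pos _).ne'
    have hne3 : ((n-1-k-ℓ).factorial : ℝ) ≠ 0 := by exact_mod_cast (Nat.factorial_pos _).ne'
    have hne4 : ((k+ℓ+1).factorial : ℝ) ≠ 0 := by exact_mod_cast (Nat.factorial_pos _).ne'
    have hne5 : γ m ^ k ≠ 0 := pow_ne_zero _ (hγne m)
    have hne6 : γ m ^ (n-1-k-ℓ) ≠ 0 := pow_ne_zero _ (hγne m)
    simp only [one_div, inv_pow]
    field_simp
  -- limit of rocS
  have hS : Tendsto (fun m : ℕ => rocS n m (γ m) P) atTop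
      (𝓝 ((n.factorial : ℝ) * Real.exp (1/c) *
        ∑ k ∈ Finset.range n, ∑ ℓ ∈ Finset.range (n-k),
          ((-1:ℝ)^k * (1/c)^k * (0:ℝ)^(n-1-k-ℓ) /
            ((k.factorial:ℝ) * ((n-1-k-ℓ).factorial:ℝ) * ((k+ℓ+1).factorial:ℝ))) *
          Real.exp (L * (((n:ℝ)-1)/n)) / b^(ℓ+1))) := by
    apply Tendsto.congr' (by filter_upwards [hSeq] with m hm; rw [hm])
    apply Tendsto.mul (tendsto_const_nhds.mul h1γpow)
    apply tendsto_finset_sum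
    intro k _
    apply tendsto_finset_sum
    intro ℓ _
    have h1 : Tendsto (fun m : ℕ => (-1:ℝ)^k * (∏ i ∈ Finset.range k, (((m:ℝ)+i)/γ m)) * (1/γ m)^(n-1-k-ℓ) /
        ((k.factorial:ℝ) * ((n-1-k-ℓ).factorial:ℝ) * ((k+ℓ+1).factorial:ℝ))) atTop
        (𝓝 ((-1:ℝ)^k * (1/c)^k * (0:ℝ)^(n-1-k-ℓ) /
          ((k.factorial:ℝ) * ((n-1-k-ℓ).factorial:ℝ) * ((k+ℓ+1).factorial:ℝ)))) := by
      apply Tendsto.div_const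
      exact (tendsto_const_nhds.mul (hFk k)).mul (hinvγ.pow _)
    have h2 : Tendsto (fun m : ℕ => Real.exp (L * (((m:ℝ)*((n:ℝ)-1)+ℓ+1)/((m:ℝ)*n)))) atTop
        (𝓝 (Real.exp (L * (((n:ℝ)-1)/n)))) := by
      apply (Real.continuous_exp.tendsto _).comp
      apply Tendsto.const_mul
      have h : Tendsto (fun m : ℕ => ((n:ℝ)-1)/n + (((ℓ:ℝ)+1)/n)*(1/(m:ℝ))) atTop (𝓝 (((n:ℝ)-1)/n)) := by
        simpa using tendsto_const_nhds.add ((tendsto_const_nhds (x := ((ℓ:ℝ)+1)/n)).mul tendsto_one_div_atTop_nhds_zero_nat)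
      apply h.congr'
      filter_upwards [eventually_gt_atTop 0] with m hm
      have hmne : (m:ℝ) ≠ 0 := Nat.cast_ne_zero.mpr hm.ne'
      field_simp
      ring
    exact (h1.mul h2).div (hw.pow (ℓ+1)) (pow_ne_zero _ hb0.ne')
  -- combine
  have hq : (1:ℝ) - P = Real.exp L := (Real.exp_log hq0).symm
  convert (tendsto_const_nhds.sub hS).sub (tendsto_const_nhds.mul hT) using 2
  rw [hq]
  -- evaluate the inner sums of the S-limit
  have hinner : ∀ k ∈ Finset.range n,
      (∑ ℓ ∈ Finset.range (n-k),
        ((-1:ℝ)^k * (1/c)^k * (0:ℝ)^(n-1-k-ℓ) /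
          ((k.factorial:ℝ) * ((n-1-k-ℓ).factorial:ℝ) * ((k+ℓ+1).factorial:ℝ))) *
        Real.exp (L * (((n:ℝ)-1)/n)) / b^(ℓ+1))
      = ((-1:ℝ)^k * (1/c)^k / ((k.factorial:ℝ) * (n.factorial:ℝ))) *
          Real.exp (L * (((n:ℝ)-1)/n)) / b^(n-k) := by
    intro k hk
    rw [Finset.mem_range] at hk
    rw [Finset.sum_eq_single_of_mem (n-1-k) (by rw [Finset.mem_range]; omega)]
    · have e1 : n-1-k-(n-1-k) = 0 := by omega
      have e2 : k+(n-1-k)+1 = n := by omega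
      have e3 : (n-1-k)+1 = n-k := by omega
      rw [e1, e2, e3]
      norm_num
    · intro ℓ hℓ hne
      rw [Finset.mem_range] at hℓ
      have : n-1-k-ℓ ≠ 0 := by omega
      rw [zero_pow this]
      simp
  rw [Finset.sum_congr rfl hinner]
  -- termwise identification with the exponential sum
  have hterm2 : ∀ k ∈ Finset.range n,
      (n.factorial : ℝ) * Real.exp (1/c) *
        (((-1:ℝ)^k * (1/c)^k / ((k.factorial:ℝ) * (n.factorial:ℝ))) *
          Real.exp (L * (((n:ℝ)-1)/n)) / b^(n-k))
      = Real.exp L * Real.exp a / b^n * ((-a)^k/(k.factorial:ℝ)) := by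
    intro k hk
    rw [Finset.mem_range] at hk
    have hbnk : b^n = b^(n-k)*b^k := by rw [← pow_add]; congr 1; omega
    have hexps : Real.exp (1/c) * Real.exp (L*(((n:ℝ)-1)/n)) = Real.exp L * Real.exp a := by
      rw [← Real.exp_add, ← Real.exp_add]
      congr 1
      rw [hadef]
      field_simp
      ring
    have hneg : ((-a):ℝ)^k = (-1:ℝ)^k * a^k := by rw [neg_pow]
    have hak : a^k = (1/c)^k * b^k := by
      rw [hba, ← mul_pow]
      congr 1
      field_simp
    rw [hneg, hak, hbnk, ← hexps]
    have hnfac : ((n.factorial:ℝ)) ≠ 0 := by exact_mod_cast (Nat.factorial_pos _).ne'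
    have hkfac : ((k.factorial:ℝ)) ≠ 0 := by exact_mod_cast (Nat.factorial_pos _).ne'
    have hbk : (b:ℝ)^k ≠ 0 := pow_ne_zero _ hb0.ne'
    have hbnk' : (b:ℝ)^(n-k) ≠ 0 := pow_ne_zero _ hb0.ne'
    field_simp
  rw [Finset.mul_sum, Finset.sum_congr rfl hterm2]
  -- final ring computation
  have hTsum : ∑ j ∈ Finset.range n, (-a)^j/(j.factorial:ℝ) * Real.exp a
      = (∑ j ∈ Finset.range n, (-a)^j/(j.factorial:ℝ)) * Real.exp a := by rw [Finset.sum_mul]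
  rw [← Finset.mul_sum, hTsum]
  set E := ∑ j ∈ Finset.range n, (-a)^j/(j.factorial:ℝ) with hEdef
  have hsq : (-1:ℝ)^n * ((-1:ℝ)^n) = 1 := by
    rw [← mul_pow]
    norm_num
  have key : ∀ z : ℝ, (-1:ℝ)^n * (Real.exp L * ((-1:ℝ)^n/b^n) * z) = Real.exp L / b^n * z := by
    intro z
    have h2 : (-1:ℝ)^n * (Real.exp L * ((-1:ℝ)^n/b^n) * z)
        = ((-1:ℝ)^n*((-1:ℝ)^n)) * (Real.exp L/b^n * z) := by ring
    rw [h2, hsq, one_mul]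
  rw [key]
  ring
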